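/- For languages U, V over Σ with ε ∉ U and ε ∉ V, and any ω-word σ ∈ (U* · V)^ω, infinitely many factors of the defining factorization of σ belong to V; consequently (U* · V)^ω ⊆ (U ∪ V)^ω and (U* · V)^ω = ((U ∪ V)* · V)^ω. -/

import Mathlib

open Computability

/-- `l` is a prefix of the ω-word `σ`. -/
def ListPrefixOf {α : Type*} (l : List α) (σ : ℕ → α) : Prop :=
  ∀ k (h : k < l.length), l.get ⟨k, h⟩ = σ k

/-- `σ` is the infinite concatenation of the nonempty finite words `f 0, f 1, f 2, …`. -/
def InfConcat {α : Type*} (f : ℕ → List α) (σ : ℕ → α) : Prop :=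
  (∀ n, f n ≠ []) ∧ ∀ n, ListPrefixOf ((List.ofFn (fun i : Fin n => f i)).flatten) σ

/-- The ω-power `S^ω`: ω-words that are infinite concatenations of words from `S`. -/
def omegaPow {α : Type*} (S : Language α) : Set (ℕ → α) :=
  {σ | ∃ f : ℕ → List α, (∀ n, f n ∈ S) ∧ InfConcat f σ}

/-- The ω-word obtained by prepending the finite word `u` to the ω-word `τ`. -/
def ωAppend {α : Type*} (u : List α) (τ : ℕ → α) : ℕ → α :=
  fun n => if h : n < u.length then u.get ⟨n, h⟩ else τ (n - u.length)

/-- Concatenation `A · L` of a language of finite words with an ω-language. -/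
def catOmega {α : Type*} (A : Language α) (L : Set (ℕ → α)) : Set (ℕ → α) :=
  {σ | ∃ u ∈ A, ∃ τ ∈ L, σ = ωAppend u τ}

/-- A transition-based nondeterministic Büchi automaton. -/
structure NBA (Q α : Type*) where
  Δ : Set (Q × α × Q)
  Q0 : Set Q
  Acc : Set (Q × α × Q)
  acc_sub : Acc ⊆ Δ

namespace NBA

variable {Q α : Type*}

/-- `F̃`: states with at least one outgoing accepting transition. -/
def Ftil (B : NBA Q α) : Set Q := {q | ∃ t y, (q, t, y) ∈ B.Acc}

/-- `p` is a run of the nonempty finite word `w` in `B` from `i` ending upon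
first reaching `j` (i.e. `j` is visited exactly once, at the end). -/
def FinRun (B : NBA Q α) (i j : Q) (w : List α) (p : ℕ → Q) : Prop :=
  p 0 = i ∧ p w.length = j ∧
  (∀ k (h : k < w.length), (p k, w.get ⟨k, h⟩, p (k + 1)) ∈ B.Δ) ∧
  (∀ k, 0 < k → k < w.length → p k ≠ j)

/-- `L_{ij,all}`: nonempty words with a run in `B` from `i` ending upon first reaching `j`. -/
def Lall (B : NBA Q α) (i j : Q) : Language α :=
  {w | w ≠ [] ∧ ∃ p : ℕ → Q, B.FinRun i j w p}

/-- `L_{ij,rej}`: words of `L_{ij,all}` with such a run whose first transition is rejecting. -/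
def Lrej (B : NBA Q α) (i j : Q) : Language α :=
  {w | w ≠ [] ∧ ∃ p : ℕ → Q, B.FinRun i j w p ∧
    ∀ h : 0 < w.length, (p 0, w.get ⟨0, h⟩, p 1) ∉ B.Acc}

/-- `L_{ij,acc}`: words of `L_{ij,all}` with such a run whose first transition is accepting. -/
def Lacc (B : NBA Q α) (i j : Q) : Language α :=
  {w | w ≠ [] ∧ ∃ p : ℕ → Q, B.FinRun i j w p ∧
    ∀ h : 0 < w.length, (p 0, w.get ⟨0, h⟩, p 1) ∈ B.Acc}

/-- `ρ` is a run of the ω-word `σ` in `B`. -/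
def ωRun (B : NBA Q α) (σ : ℕ → α) (ρ : ℕ → Q) : Prop :=
  ρ 0 ∈ B.Q0 ∧ ∀ k, (ρ k, σ k, ρ (k + 1)) ∈ B.Δ

/-- `B` accepts `σ`: some run traverses accepting transitions at infinitely many positions. -/
def Accepts (B : NBA Q α) (σ : ℕ → α) : Prop :=
  ∃ ρ : ℕ → Q, B.ωRun σ ρ ∧ ∀ N, ∃ k ≥ N, (ρ k, σ k, ρ (k + 1)) ∈ B.Acc

end NBA

instance {α : Type*} : Union (Language α) := ⟨fun l m => {w | w ∈ l ∨ w ∈ m}⟩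
instance {α : Type*} : Inter (Language α) := ⟨fun l m => {w | w ∈ l ∧ w ∈ m}⟩
instance {α : Type*} : EmptyCollection (Language α) := ⟨(∅ : Set (List α))⟩

section aux
variable {α β : Type*}

lemma ofFn_nat_congr (g : ℕ → β) {m n : ℕ} (h : m = n) :
    (List.ofFn fun i : Fin m => g i) = (List.ofFn fun i : Fin n => g i) := by subst h; rfl

lemma ofFn_nat_add (g : ℕ → β) (a d : ℕ) :
    (List.ofFn fun i : Fin (a + d) => g i)
      = (List.ofFn fun i : Fin a => g i) ++ (List.ofFn fun i : Fin d => g (a + i)) := by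
  apply List.ext_getElem
  · simp
  · intro i h1 h2
    simp only [List.getElem_ofFn, List.getElem_append, List.length_ofFn]
    split_ifs with h
    · rfl
    · congr 1
      omega

lemma ofFn_nat_snoc (g : ℕ → β) (d : ℕ) :
    (List.ofFn fun i : Fin (d + 1) => g i) = (List.ofFn fun i : Fin d => g i) ++ [g d] := by
  rw [ofFn_nat_add g d 1]; simp

lemma ofFn_nat_prefix (g : ℕ → β) {m n : ℕ} (h : m ≤ n) :
    (List.ofFn fun i : Fin m => g i) <+: (List.ofFn fun i : Fin n => g i) :=
  ⟨List.ofFn fun i : Fin (n - m) => g (m + i), by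
    rw [← ofFn_nat_add]; exact ofFn_nat_congr g (by omega)⟩

lemma flatten_prefix' {l l' : List (List α)} (h : l <+: l') : l.flatten <+: l'.flatten := by
  obtain ⟨t, rfl⟩ := h
  rw [List.flatten_append]
  exact List.prefix_append _ _

lemma prefixOf_mono {l l' : List α} {σ : ℕ → α} (h : l' <+: l)
    (hl : ListPrefixOf l σ) : ListPrefixOf l' σ := by
  intro k hk
  obtain ⟨t, rfl⟩ := h
  have hk' : k < (l' ++ t).length := by simp; omega
  have h2 := hl k hk'
  rw [List.get_eq_getElem, List.getElem_append, dif_pos hk] at h2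
  simpa using h2

lemma flatten_flatten' (L : List (List (List α))) :
    L.flatten.flatten = (L.map List.flatten).flatten := by
  induction L with
  | nil => rfl
  | cons h t ih => simp [List.flatten_append, ih]

end aux

section main
variable {α : Type*}

lemma refine_lemma {A B : Language α} (hA : [] ∉ A) (hB : [] ∉ B) {σ : ℕ → α}
    (hσ : σ ∈ omegaPow (A∗ * B)) :
    ∃ g : ℕ → List α, InfConcat g σ ∧ (∀ n, g n ∈ A ∨ g n ∈ B) ∧ ∀ N, ∃ n ≥ N, g n ∈ B := by
  classical
  obtain ⟨f, hf, hne, hpre⟩ := hσ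
  have h1 : ∀ n, ∃ (Ln : List (List α)) (bn : List α),
      (∀ x ∈ Ln, x ∈ A) ∧ bn ∈ B ∧ f n = (Ln ++ [bn]).flatten := by
    intro n
    obtain ⟨a, ha, b, hb, hab⟩ := Language.mem_mul.1 (hf n)
    obtain ⟨L, rfl, hL⟩ := Language.mem_kstar.1 ha
    exact ⟨L, b, hL, hb, by simp [← hab, List.flatten_append]⟩
  choose L b hL hb hfn using h1
  obtain ⟨F, hF⟩ : ∃ F : ℕ → List (List α), ∀ n, F n = L n ++ [b n] := ⟨_, fun n => rfl⟩
  have hFlen : ∀ n, 0 < (F n).length := by intro n; rw [hF]; simp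
  have hFmem : ∀ n x, x ∈ F n → (x ∈ A ∨ x ∈ B) := by
    intro n x hx
    rw [hF] at hx
    rcases List.mem_append.1 hx with h | h
    · exact Or.inl (hL n x h)
    · obtain rfl := List.mem_singleton.1 h
      exact Or.inr (hb n)
  obtain ⟨c, hc⟩ : ∃ c : ℕ → ℕ,
      ∀ n, c n = ((List.ofFn fun i : Fin n => F i).flatten).length := ⟨_, fun n => rfl⟩
  have hc0 : c 0 = 0 := by rw [hc]; simp
  have hcs : ∀ n, c (n + 1) = c n + (F n).length := by
    intro n
    rw [hc, hc, List.ofFn_succ']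
    simp [List.flatten_append]
  have hmono : Monotone c := monotone_nat_of_le_succ fun n => by rw [hcs]; omega
  have hlb : ∀ n, n ≤ c n := by
    intro n
    induction n with
    | zero => omega
    | succ k ih => have := hcs k; have := hFlen k; omega
  have hex : ∀ m, ∃ n, m < c (n + 1) :=
    fun m => ⟨m, by have := hlb m; have := hcs m; have := hFlen m; omega⟩
  obtain ⟨N, hN1, hNmin⟩ : ∃ N : ℕ → ℕ, (∀ m, m < c (N m + 1)) ∧
      (∀ m k, k < N m → ¬ m < c (k + 1)) :=
    ⟨fun m => Nat.find (hex m), fun m => Nat.find_spec (hex m),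
      fun m k h => Nat.find_min (hex m) h⟩
  have hN2 : ∀ m, c (N m) ≤ m := by
    intro m
    by_cases h : N m = 0
    · rw [h, hc0]; omega
    · have h3 := hNmin m (N m - 1) (by omega)
      have h4 : N m - 1 + 1 = N m := by omega
      rw [h4] at h3
      omega
  have hNeq : ∀ n j, c n ≤ j → j < c (n + 1) → N j = n := by
    intro n j hj1 hj2
    by_contra hcon
    rcases Nat.lt_or_ge (N j) n with h | h
    · have h5 := hN1 j
      have h6 := hmono (show N j + 1 ≤ n by omega)
      omega
    · exact hNmin j n (by omega) hj2
  obtain ⟨g, hg⟩ : ∃ g : ℕ → List α, ∀ m, g m = (F (N m)).getD (m - c (N m)) [] :=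
    ⟨_, fun m => rfl⟩
  have hglt : ∀ m, m - c (N m) < (F (N m)).length := by
    intro m; have := hN1 m; have := hN2 m; have := hcs (N m); omega
  have hgmem : ∀ m, g m ∈ F (N m) := by
    intro m
    rw [hg, List.getD_eq_getElem _ _ (hglt m)]
    exact List.getElem_mem _
  have hgAB : ∀ m, g m ∈ A ∨ g m ∈ B := fun m => hFmem _ _ (hgmem m)
  have hgne : ∀ m, g m ≠ [] := by
    intro m h
    rcases hgAB m with h2 | h2
    · rw [h] at h2; exact hA h2
    · rw [h] at h2; exact hB h2
  have hkey : ∀ n j, j < (F n).length → g (c n + j) = (F n).getD j [] := by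
    intro n j hj
    have hNj : N (c n + j) = n := hNeq n (c n + j) (by omega) (by rw [hcs]; omega)
    rw [hg, hNj, Nat.add_sub_cancel_left]
  have hId : ∀ n, (List.ofFn fun i : Fin (c n) => g i)
      = (List.ofFn fun i : Fin n => F i).flatten := by
    intro n
    induction n with
    | zero => rw [hc0]; simp
    | succ k ih =>
      have hpiece : (List.ofFn fun i : Fin ((F k).length) => g (c k + ↑i)) = F k := by
        apply List.ext_getElem
        · simp
        · intro i hi1 hi2
          rw [List.getElem_ofFn]
          rw [show g (c k + ↑(⟨i, by simpa using hi1⟩ : Fin (F k).length)) = (F k).getD i []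
            from hkey k i hi2]
          exact List.getD_eq_getElem _ _ hi2
      rw [ofFn_nat_congr g (hcs k), ofFn_nat_add, ih, hpiece, List.ofFn_succ']
      simp [List.flatten_append]
  have hInf : InfConcat g σ := by
    refine ⟨hgne, fun m => ?_⟩
    have h1 : (List.ofFn fun i : Fin m => g i).flatten
        <+: (List.ofFn fun i : Fin (c m) => g i).flatten :=
      flatten_prefix' (ofFn_nat_prefix g (hlb m))
    have h2 : (List.ofFn fun i : Fin (c m) => g i).flatten
        = (List.ofFn fun i : Fin m => f i).flatten := by
      rw [hId m, flatten_flatten', List.map_ofFn]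
      refine congrArg List.flatten (congrArg List.ofFn (funext fun i => ?_))
      show (F ↑i).flatten = f ↑i
      rw [hF, ← hfn]
    exact prefixOf_mono (h2 ▸ h1) (hpre m)
  refine ⟨g, hInf, hgAB, fun N' => ?_⟩
  refine ⟨c N' + ((F N').length - 1), by have := hlb N'; omega, ?_⟩
  rw [hkey N' ((F N').length - 1) (by have := hFlen N'; omega)]
  have hlen : (F N').length - 1 = (L N').length := by rw [hF]; simp
  rw [hlen, hF, List.getD_eq_getElem _ _ (by simp), List.getElem_concat_length rfl]
  exact hb N'

end main

section main2
variable {α : Type*}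

lemma group_lemma {U V : Language α} (hV : [] ∉ V) {σ : ℕ → α} {g : ℕ → List α}
    (hg : InfConcat g σ) (hUV : ∀ n, g n ∈ U ∨ g n ∈ V) (hinf : ∀ N, ∃ n ≥ N, g n ∈ V) :
    σ ∈ omegaPow (U∗ * V) := by
  classical
  obtain ⟨hgne, hgpre⟩ := hg
  obtain ⟨φ, K, hφ0, hφs, hKspec, hKmin⟩ :
      ∃ (φ K : ℕ → ℕ), φ 0 = 0 ∧ (∀ n, φ (n + 1) = K n + 1) ∧
        (∀ n, φ n ≤ K n ∧ g (K n) ∈ V) ∧ (∀ n i, i < K n → ¬(i ≥ φ n ∧ g i ∈ V)) := by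
    refine ⟨fun n => Nat.rec 0 (fun _ p => Nat.find (hinf p) + 1) n,
      fun n => Nat.find (hinf (Nat.rec 0 (fun _ p => Nat.find (hinf p) + 1) n)),
      rfl, fun n => rfl, fun n => ?_, fun n i h => Nat.find_min _ h⟩
    exact Nat.find_spec (hinf _)
  have hKU : ∀ n i, φ n ≤ i → i < K n → g i ∈ U := by
    intro n i h1 h2
    rcases hUV i with h | h
    · exact h
    · exact absurd ⟨h1, h⟩ (hKmin n i h2)
  obtain ⟨F, hFdef⟩ : ∃ F : ℕ → List α, ∀ n,
      F n = (List.ofFn fun i : Fin (K n - φ n) => g (φ n + ↑i)).flatten ++ g (K n) :=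
    ⟨_, fun n => rfl⟩
  have hFne : ∀ n, F n ≠ [] := by
    intro n h
    rw [hFdef] at h
    exact hV ((List.append_eq_nil_iff.1 h).2 ▸ (hKspec n).2)
  have hFmem : ∀ n, F n ∈ U∗ * V := by
    intro n
    refine Language.mem_mul.2 ⟨_, ?_, g (K n), (hKspec n).2, (hFdef n).symm⟩
    refine Language.mem_kstar.2 ⟨List.ofFn fun i : Fin (K n - φ n) => g (φ n + ↑i), rfl, ?_⟩
    intro y hy
    rcases List.mem_ofFn.1 hy with ⟨i, rfl⟩
    have hi := i.isLt
    exact hKU n (φ n + ↑i) (by omega) (by omega)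
  have hmainW : ∀ n, (List.ofFn fun i : Fin (φ n) => g ↑i).flatten ++ F n
      = (List.ofFn fun i : Fin (φ (n + 1)) => g ↑i).flatten := by
    intro n
    have e1 : (List.ofFn fun i : Fin (K n + 1) => g ↑i)
        = (List.ofFn fun i : Fin (K n) => g ↑i) ++ [g (K n)] := ofFn_nat_snoc g (K n)
    have e2 : (List.ofFn fun i : Fin (K n) => g ↑i)
        = (List.ofFn fun i : Fin (φ n) => g ↑i)
          ++ (List.ofFn fun i : Fin (K n - φ n) => g (φ n + ↑i)) := by
      rw [ofFn_nat_congr g (show K n = φ n + (K n - φ n) by have := (hKspec n).1; omega),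
        ofFn_nat_add]
    rw [hFdef n, hφs n, e1, e2]
    simp [List.flatten_append]
  have hId2 : ∀ n, (List.ofFn fun i : Fin n => F i).flatten
      = (List.ofFn fun i : Fin (φ n) => g ↑i).flatten := by
    intro n
    induction n with
    | zero => rw [hφ0]; simp
    | succ k ih =>
      rw [ofFn_nat_snoc F k, List.flatten_append, ih,
        show ([F k] : List (List α)).flatten = F k by simp]
      exact hmainW k
  refine ⟨F, hFmem, hFne, fun n => ?_⟩
  rw [hId2 n]
  exact hgpre (φ n)

end main2


/-- for languages of nonempty words `U, V`, every `σ ∈ (U* · V)^ω` has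
a factorization with each factor in `U ∪ V` and infinitely many factors in `V`;
consequently `(U* · V)^ω ⊆ (U ∪ V)^ω` and `(U* · V)^ω = ((U ∪ V)* · V)^ω`. -/
theorem stmt15 {α : Type*} (U V : Language α) (hU : [] ∉ U) (hV : [] ∉ V) :
    (∀ σ ∈ omegaPow (U∗ * V),
      ∃ f : ℕ → List α, InfConcat f σ ∧ (∀ n, f n ∈ U ∪ V) ∧
        ∀ N, ∃ n ≥ N, f n ∈ V) ∧
    omegaPow (U∗ * V) ⊆ omegaPow (U ∪ V) ∧
    omegaPow (U∗ * V) = omegaPow ((U ∪ V)∗ * V) := by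
  have hUVne : ([] : List α) ∉ (U ∪ V) := by
    intro h
    rcases h with h | h
    · exact hU h
    · exact hV h
  refine ⟨?_, ?_, ?_⟩
  · intro σ hσ
    obtain ⟨g, h1, h2, h3⟩ := refine_lemma hU hV hσ
    exact ⟨g, h1, h2, h3⟩
  · intro σ hσ
    obtain ⟨g, h1, h2, h3⟩ := refine_lemma hU hV hσ
    exact ⟨g, h2, h1⟩
  · apply Set.Subset.antisymm
    · intro σ hσ
      obtain ⟨g, h1, h2, h3⟩ := refine_lemma hU hV hσ
      exact group_lemma hV h1 (fun n => Or.inl (h2 n)) h3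
    · intro σ hσ
      obtain ⟨g, h1, h2, h3⟩ := refine_lemma hUVne hV hσ
      refine group_lemma hV h1 (fun n => ?_) h3
      rcases h2 n with h | h
      · exact h
      · exact Or.inr h
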